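/- For every h ∈ ℋ, the function ψ_h : \overline\nabla_\infty → ℝ defined by ψ_h(x) := ∑_{i=1}^∞ h(x_i) is continuous on \overline\nabla_\infty with respect to the product topology. -/

import Mathlib

open Set

/-- The Kingman simplex: nonincreasing nonnegative sequences with sum at most 1. -/
def KingmanSimplex : Set (ℕ → ℝ) :=
  {x | (∀ i, x (i + 1) ≤ x i) ∧ (∀ i, 0 ≤ x i) ∧ Summable x ∧ ∑' i, x i ≤ 1}

/-- For every `h ∈ ℋ` (twice continuously differentiable on `[0,1]` with
`h(0) = h'(0) = 0`), the function `ψ_h(x) := ∑ h(x_i)` is continuous on the Kingman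
simplex with respect to the product topology. -/
theorem psi_h_continuousOn
    (h h' h'' : ℝ → ℝ)
    (hd1 : ∀ u ∈ Icc (0 : ℝ) 1, HasDerivWithinAt h (h' u) (Icc (0 : ℝ) 1) u)
    (hd2 : ∀ u ∈ Icc (0 : ℝ) 1, HasDerivWithinAt h' (h'' u) (Icc (0 : ℝ) 1) u)
    (hcont : ContinuousOn h'' (Icc (0 : ℝ) 1))
    (h0 : h 0 = 0) (h'0 : h' 0 = 0) :
    ContinuousOn (fun x : ℕ → ℝ => ∑' i, h (x i)) KingmanSimplex := by
  obtain ⟨M, hM⟩ := isCompact_Icc.exists_bound_of_continuousOn hcont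
  have hM0 : 0 ≤ M := le_trans (norm_nonneg _) (hM 0 ⟨le_refl 0, zero_le_one⟩)
  -- |h' u| ≤ M * u on [0,1]
  have hb1 : ∀ u ∈ Icc (0 : ℝ) 1, ‖h' u‖ ≤ M * u := by
    intro u hu
    have key := (convex_Icc (0 : ℝ) 1).norm_image_sub_le_of_norm_hasDerivWithin_le
      hd2 hM ⟨le_refl 0, zero_le_one⟩ hu
    simpa [h'0, Real.norm_eq_abs, abs_of_nonneg hu.1] using key
  -- |h t| ≤ M * t^2 on [0,1]
  have hb : ∀ t ∈ Icc (0 : ℝ) 1, ‖h t‖ ≤ M * t ^ 2 := by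
    intro t ht
    have hsub : Icc (0 : ℝ) t ⊆ Icc 0 1 := Icc_subset_Icc le_rfl ht.2
    have key := (convex_Icc (0 : ℝ) t).norm_image_sub_le_of_norm_hasDerivWithin_le
      (fun u hu => (hd1 u (hsub hu)).mono hsub)
      (fun u hu => le_trans (hb1 u (hsub hu)) (mul_le_mul_of_nonneg_left hu.2 hM0))
      ⟨le_refl 0, ht.1⟩ ⟨ht.1, le_refl t⟩
    have hkey : ‖h t‖ ≤ M * t * t := by
      simpa [h0, Real.norm_eq_abs, abs_of_nonneg ht.1] using key
    calc ‖h t‖ ≤ M * t * t := hkey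
      _ = M * t ^ 2 := by ring
  -- membership facts
  have hmem : ∀ x ∈ KingmanSimplex, ∀ n : ℕ, x n ∈ Icc (0 : ℝ) 1 ∧ x n ≤ ((n : ℝ) + 1)⁻¹ := by
    rintro x ⟨hdec, hnn, hsum, hle⟩ n
    have hanti : ∀ i j : ℕ, i ≤ j → x j ≤ x i := fun i j hij =>
      (antitone_nat_of_succ_le hdec) hij
    have hsum_le : ∀ m : ℕ, ∑ i ∈ Finset.range m, x i ≤ 1 :=
      fun m => le_trans (Summable.sum_le_tsum _ (fun i _ => hnn i) hsum) hle
    have hpos : (0 : ℝ) < (n : ℝ) + 1 := by positivity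
    have hxn : ((n : ℝ) + 1) * x n ≤ 1 := by
      have h1 : ∑ i ∈ Finset.range (n + 1), x n ≤ ∑ i ∈ Finset.range (n + 1), x i :=
        Finset.sum_le_sum fun i hi => hanti i n (Nat.lt_succ_iff.mp (Finset.mem_range.mp hi))
      have h2 : ((n : ℝ) + 1) * x n ≤ ∑ i ∈ Finset.range (n + 1), x i := by
        simpa [Finset.sum_const, nsmul_eq_mul, add_mul, mul_comm] using h1
      exact le_trans h2 (hsum_le (n + 1))
    have hxinv : x n ≤ ((n : ℝ) + 1)⁻¹ := by
      rw [← one_div, le_div_iff₀ hpos]; linarith [hxn]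
    have hx0 : x 0 ≤ 1 := by simpa using hsum_le 1
    exact ⟨⟨hnn n, le_trans (hanti 0 n (Nat.zero_le n)) hx0⟩, hxinv⟩
  -- uniform bound and summability
  set u : ℕ → ℝ := fun n => M * (((n : ℝ) + 1) ^ 2)⁻¹ with hu_def
  have hu_summable : Summable u := by
    have hs : Summable fun n : ℕ => ((n : ℝ) ^ 2)⁻¹ := by
      simpa [one_div] using Real.summable_one_div_nat_pow.mpr one_lt_two
    have hs' : Summable fun n : ℕ => (((n : ℝ) + 1) ^ 2)⁻¹ := by
      have := (summable_nat_add_iff 1).mpr hs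
      simpa [Nat.cast_add] using this
    exact hs'.mul_left M
  have hbound : ∀ n : ℕ, ∀ x ∈ KingmanSimplex, ‖h (x n)‖ ≤ u n := by
    intro n x hx
    obtain ⟨hIcc, hinv⟩ := hmem x hx n
    have h1 : ‖h (x n)‖ ≤ M * (x n) ^ 2 := hb _ hIcc
    have h2 : (x n) ^ 2 ≤ (((n : ℝ) + 1)⁻¹) ^ 2 :=
      pow_le_pow_left₀ hIcc.1 hinv 2
    calc ‖h (x n)‖ ≤ M * (x n) ^ 2 := h1
      _ ≤ M * (((n : ℝ) + 1)⁻¹) ^ 2 := by nlinarith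
      _ = u n := by rw [hu_def]; simp [inv_pow]
  have htu : TendstoUniformlyOn (fun (t : Finset ℕ) (x : ℕ → ℝ) => ∑ n ∈ t, h (x n))
      (fun x => ∑' n, h (x n)) Filter.atTop KingmanSimplex :=
    tendstoUniformlyOn_tsum hu_summable fun n x hx => hbound n x hx
  have hhcont : ContinuousOn h (Icc (0 : ℝ) 1) := fun v hv =>
    (hd1 v hv).continuousWithinAt
  refine htu.continuousOn (Filter.Eventually.of_forall fun t => ?_).frequently
  exact continuousOn_finset_sum t fun i _ =>
    hhcont.comp (continuous_apply i).continuousOn fun x hx => (hmem x hx i).1
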